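/- arXiv:2103.00553 — 2 statements merged into one kernel-verified Lean document; each statement's English description precedes it below -/
import Mathlib

section
/- Suppose the assignments are independent across time (so τ̂_t^{TE} and τ̂_{t−1}^{TE} are uncorrelated) and Var(τ̂_t^{TE}) > 0. Then there exists α ∈ (0,1) such that the convex combination estimator τ̂_t^c = α τ̂_t^{TE} + (1 − α) τ̂_{t−1}^{TE} has mean squared error for τ_t^{TE} strictly lower than that of τ̂_t^{TE}; the optimal such weight is α = 1 − Var(τ̂_t^{TE}) / (4ε² + Var(τ̂_t^{TE}) + Var(τ̂_{t−1}^{TE})), and with this α one has MSE(τ̂_t^c) ≤ α²Var(τ̂_t^{TE}) + (1−α)²Var(τ̂_{t−1}^{TE}) + 4(1−α)²ε² < Var(τ̂_t^{TE}). -/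
open MeasureTheory ProbabilityTheory Filter
open scoped ProbabilityTheory

/-- Horvitz–Thompson estimator of the total effect, based on the exposures `h1 i`
(everybody treated) and `h0 i` (everybody in control). -/
noncomputable def htTE {Ω Δ : Type*} [MeasureSpace Ω] [DecidableEq Δ] {n : ℕ}
    (H : Fin n → Ω → Δ) (Y : Fin n → Δ → ℝ) (h1 h0 : Fin n → Δ) (ω : Ω) : ℝ :=
  (n : ℝ)⁻¹ * ∑ i : Fin n,
    ((if H i ω = h1 i then Y i (h1 i) / (ℙ {ω' | H i ω' = h1 i}).toReal else 0)
      - (if H i ω = h0 i then Y i (h0 i) / (ℙ {ω' | H i ω' = h0 i}).toReal else 0))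

/-- The total effect `τ_t^{TE}`. -/
noncomputable def totalEffect {Δ : Type*} {n : ℕ}
    (Y : Fin n → Δ → ℝ) (h1 h0 : Fin n → Δ) : ℝ :=
  (n : ℝ)⁻¹ * ∑ i : Fin n, (Y i (h1 i) - Y i (h0 i))

/-- The "outcome functional" through which the HT estimator factors. -/
noncomputable def htF {Ω Δ : Type*} [MeasureSpace Ω] [DecidableEq Δ] {n : ℕ}
    (H : Fin n → Ω → Δ) (Y : Fin n → Δ → ℝ) (h1 h0 : Fin n → Δ) (v : Fin n → Δ) : ℝ :=
  (n : ℝ)⁻¹ * ∑ i : Fin n,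
    ((if v i = h1 i then Y i (h1 i) / (ℙ {ω' | H i ω' = h1 i}).toReal else 0)
      - (if v i = h0 i then Y i (h0 i) / (ℙ {ω' | H i ω' = h0 i}).toReal else 0))

lemma htTE_eq_comp {Ω Δ : Type*} [MeasureSpace Ω] [DecidableEq Δ] {n : ℕ}
    (H : Fin n → Ω → Δ) (Y : Fin n → Δ → ℝ) (h1 h0 : Fin n → Δ) :
    htTE H Y h1 h0 = htF H Y h1 h0 ∘ (fun ω i => H i ω) := rfl

lemma htTE_memLp {Ω Δ : Type*} [MeasureSpace Ω] [IsProbabilityMeasure (ℙ : Measure Ω)]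
    [Fintype Δ] [DecidableEq Δ] [MeasurableSpace Δ] [MeasurableSingletonClass Δ] {n : ℕ}
    (H : Fin n → Ω → Δ) (hm : ∀ i, Measurable (H i)) (Y : Fin n → Δ → ℝ)
    (h1 h0 : Fin n → Δ) : MemLp (htTE H Y h1 h0) 2 ℙ := by
  rw [htTE_eq_comp]
  have hV : Measurable (fun ω (i : Fin n) => H i ω) := measurable_pi_lambda _ hm
  obtain ⟨C, hC⟩ := Finite.exists_le (fun v => ‖htF H Y h1 h0 v‖)
  exact MemLp.of_bound ((measurable_of_finite _).comp hV).aestronglyMeasurable C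
    (Eventually.of_forall fun ω => hC _)
lemma mse_decomp {Ω : Type*} [MeasureSpace Ω] [IsProbabilityMeasure (ℙ : Measure Ω)]
    (X Z : Ω → ℝ) (hX : MemLp X 2 ℙ) (hZ : MemLp Z 2 ℙ)
    (hind : IndepFun X Z ℙ) (τ τ' : ℝ) (hEX : ∫ ω, X ω = τ) (hEZ : ∫ ω, Z ω = τ')
    (α : ℝ) :
    ∫ ω, (α * X ω + (1 - α) * Z ω - τ) ^ 2
      = α ^ 2 * variance X ℙ + (1 - α) ^ 2 * variance Z ℙ + (1 - α) ^ 2 * (τ' - τ) ^ 2 := by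
  set X' : Ω → ℝ := fun ω => X ω - τ with hX'
  set Z' : Ω → ℝ := fun ω => Z ω - τ' with hZ'
  have hmX : MemLp X' 2 ℙ := hX.sub (memLp_const τ)
  have hmZ : MemLp Z' 2 ℙ := hZ.sub (memLp_const τ')
  have hiX : Integrable X' ℙ := hmX.integrable one_le_two
  have hiZ : Integrable Z' ℙ := hmZ.integrable one_le_two
  have hiX2 : Integrable (fun ω => X' ω ^ 2) ℙ := by
    simpa [sq] using hmX.integrable_sq
  have hiZ2 : Integrable (fun ω => Z' ω ^ 2) ℙ := by
    simpa [sq] using hmZ.integrable_sq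
  have hindc : IndepFun X' Z' ℙ := by
    exact hind.comp (measurable_id.sub_const τ) (measurable_id.sub_const τ')
  have hiXZ : Integrable (fun ω => X' ω * Z' ω) ℙ := hindc.integrable_mul hiX hiZ
  have hEX' : ∫ ω, X' ω = 0 := by
    rw [hX', integral_sub (hX.integrable one_le_two) (integrable_const τ)]
    simp [hEX]
  have hEZ' : ∫ ω, Z' ω = 0 := by
    rw [hZ', integral_sub (hZ.integrable one_le_two) (integrable_const τ')]
    simp [hEZ]
  have hcov : ∫ ω, X' ω * Z' ω = 0 := by
    have := hindc.integral_mul_eq_mul_integral hiX.1 hiZ.1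
    rw [show (∫ ω, X' ω * Z' ω) = integral ℙ (X' * Z') from rfl, this, hEX', hEZ', mul_zero]
  have hvarX : variance X ℙ = ∫ ω, X' ω ^ 2 := by
    rw [variance_eq_integral hX.aemeasurable]; simp [hX', hEX]
  have hvarZ : variance Z ℙ = ∫ ω, Z' ω ^ 2 := by
    rw [variance_eq_integral hZ.aemeasurable]; simp [hZ', hEZ]
  set b : ℝ := τ' - τ with hb
  have expand : ∀ ω, (α * X ω + (1 - α) * Z ω - τ) ^ 2
      = α ^ 2 * X' ω ^ 2 + (1 - α) ^ 2 * Z' ω ^ 2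
        + (2 * α * (1 - α)) * (X' ω * Z' ω)
        + (2 * α * (1 - α) * b) * X' ω + (2 * (1 - α) ^ 2 * b) * Z' ω
        + (1 - α) ^ 2 * b ^ 2 := by
    intro ω; simp only [hX', hZ', hb]; ring
  calc ∫ ω, (α * X ω + (1 - α) * Z ω - τ) ^ 2
      = ∫ ω, (α ^ 2 * X' ω ^ 2 + (1 - α) ^ 2 * Z' ω ^ 2
        + (2 * α * (1 - α)) * (X' ω * Z' ω)
        + (2 * α * (1 - α) * b) * X' ω + (2 * (1 - α) ^ 2 * b) * Z' ω
        + (1 - α) ^ 2 * b ^ 2) := by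
        exact integral_congr_ae (Filter.Eventually.of_forall expand)
    _ = α ^ 2 * variance X ℙ + (1 - α) ^ 2 * variance Z ℙ + (1 - α) ^ 2 * b ^ 2 := by
        rw [integral_add, integral_add, integral_add, integral_add,
          integral_add (hiX2.const_mul _) (hiZ2.const_mul _)]
        · rw [integral_const_mul, integral_const_mul, integral_const_mul,
            integral_const_mul, integral_const_mul, hEX', hEZ', hcov, integral_const,
            hvarX, hvarZ]
          simp
        all_goals
          first
          | exact integrable_const _
          | exact (hiX2.const_mul _)
          | exact (hiZ2.const_mul _)
          | exact (hiXZ.const_mul _)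
          | exact (hiX.const_mul _)
          | exact (hiZ.const_mul _)
          | (apply Integrable.add <;>
              first
              | exact integrable_const _
              | exact (hiX2.const_mul _)
              | exact (hiZ2.const_mul _)
              | exact (hiXZ.const_mul _)
              | exact (hiX.const_mul _)
              | exact (hiZ.const_mul _)
              | (apply Integrable.add <;>
                  first
                  | exact (hiX2.const_mul _)
                  | exact (hiZ2.const_mul _)
                  | exact (hiXZ.const_mul _)
                  | exact (hiX.const_mul _)
                  | exact (hiZ.const_mul _)
                  | (apply Integrable.add <;>
                      first
                      | exact (hiX2.const_mul _)
                      | exact (hiZ2.const_mul _)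
                      | exact (hiXZ.const_mul _)
                      | (apply Integrable.add <;>
                          first
                          | exact (hiX2.const_mul _)
                          | exact (hiZ2.const_mul _)))))

lemma alg_a (Vt Vz b2 ε2 : ℝ) (hVt : 0 < Vt) (hVz : 0 ≤ Vz) (hε2 : 0 ≤ ε2)
    (hb2 : b2 ≤ 4 * ε2) (hb20 : 0 ≤ b2) :
    ∃ α ∈ Set.Ioo (0 : ℝ) 1, α ^ 2 * Vt + (1 - α) ^ 2 * Vz + (1 - α) ^ 2 * b2 < Vt := by
  set C : ℝ := Vz + 4 * ε2 with hC
  have hC0 : 0 ≤ C := by positivity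
  have hs : 0 < Vt + C := by linarith
  refine ⟨(C + Vt / 2) / (Vt + C), ⟨div_pos (by linarith) hs, (div_lt_one hs).mpr (by linarith)⟩, ?_⟩
  set α₀ : ℝ := (C + Vt / 2) / (Vt + C) with hα₀
  have keyeq : α₀ ^ 2 * Vt + (1 - α₀) ^ 2 * C
      = ((C + Vt / 2) ^ 2 * Vt + (Vt / 2) ^ 2 * C) / (Vt + C) ^ 2 := by
    rw [hα₀]; field_simp
    ring
  have keylt : α₀ ^ 2 * Vt + (1 - α₀) ^ 2 * C < Vt := by
    rw [keyeq, div_lt_iff₀ (by positivity)]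
    nlinarith [mul_pos hVt hVt, mul_nonneg hC0 hVt.le, mul_pos (mul_pos hVt hVt) hVt,
      mul_nonneg (mul_nonneg hC0 hC0) hVt.le]
  nlinarith [sq_nonneg (1 - α₀)]

lemma alg_b (Vt Vz b2 ε2 : ℝ) (hVt : 0 < Vt) (hVz : 0 ≤ Vz) (hε2 : 0 ≤ ε2)
    (hb2 : b2 ≤ 4 * ε2) (α : ℝ) (hα : α = 1 - Vt / (4 * ε2 + Vt + Vz)) :
    (α ^ 2 * Vt + (1 - α) ^ 2 * Vz + (1 - α) ^ 2 * b2
      ≤ α ^ 2 * Vt + (1 - α) ^ 2 * Vz + 4 * (1 - α) ^ 2 * ε2) ∧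
    α ^ 2 * Vt + (1 - α) ^ 2 * Vz + 4 * (1 - α) ^ 2 * ε2 < Vt := by
  set D : ℝ := 4 * ε2 + Vt + Vz with hD
  have hD0 : 0 < D := by positivity
  have e2 : α * D = Vz + 4 * ε2 := by
    rw [hα]; field_simp; ring
  have e3 : (1 - α) * D = Vt := by
    rw [hα]; field_simp; ring
  constructor
  · nlinarith [sq_nonneg (1 - α)]
  · set c : ℝ := Vz + 4 * ε2 with hc
    have hc0 : 0 ≤ c := by positivity
    have e4 : α ^ 2 * D ^ 2 = c ^ 2 := by rw [← e2]; ring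
    have e5 : (1 - α) ^ 2 * D ^ 2 = Vt ^ 2 := by rw [← e3]; ring
    have lhs_eq : (α ^ 2 * Vt + (1 - α) ^ 2 * Vz + 4 * (1 - α) ^ 2 * ε2) * D ^ 2
        = Vt * c ^ 2 + Vt ^ 2 * c := by
      linear_combination Vt * e4 + (Vz + 4 * ε2) * e5
    have hDc : D = Vt + c := by rw [hD, hc]; ring
    have hlt : (α ^ 2 * Vt + (1 - α) ^ 2 * Vz + 4 * (1 - α) ^ 2 * ε2) * D ^ 2
        < Vt * D ^ 2 := by
      rw [lhs_eq, hDc]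
      nlinarith [mul_pos (mul_pos hVt hVt) hVt, mul_nonneg (mul_nonneg hVt.le hVt.le) hc0]
    exact lt_of_mul_lt_mul_right hlt (sq_nonneg D)

/-- Proposition 3: with temporally independent assignments, a convex
combination of the current and previous Horvitz–Thompson estimators has strictly lower
mean squared error, with explicit optimal weight. -/
theorem stmt12 {Ω Δ : Type*} [MeasureSpace Ω] [IsProbabilityMeasure (ℙ : Measure Ω)]
    [Fintype Δ] [DecidableEq Δ] [MeasurableSpace Δ] [MeasurableSingletonClass Δ]
    {n T : ℕ}
    (H : ℕ → Fin n → Ω → Δ) (hmeas : ∀ (t : ℕ) (i : Fin n), Measurable (H t i))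
    (Y : ℕ → Fin n → Δ → ℝ) (h1 h0 : Fin n → Δ)
    -- exposure probabilities are positive
    (hpos : ∀ (t : ℕ), t < T → ∀ i : Fin n,
      0 < (ℙ {ω | H t i ω = h1 i}).toReal ∧ 0 < (ℙ {ω | H t i ω = h0 i}).toReal)
    -- ε-weak stability of the potential outcomes
    (ε : ℝ)
    (hstab : ∀ t : ℕ, t + 1 < T → ∀ (i : Fin n) (a : Δ), |Y t i a - Y (t + 1) i a| ≤ ε)
    -- the Horvitz–Thompson estimators are unbiased
    (hunbiased : ∀ t : ℕ, t < T →
      ∫ ω, htTE (H t) (Y t) h1 h0 ω = totalEffect (Y t) h1 h0)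
    (t : ℕ) (ht1 : 1 ≤ t) (htT : t < T)
    -- assignments are independent across time, so the exposures at times t and t − 1
    -- are independent (hence the two estimators are uncorrelated)
    (hindep : IndepFun (fun ω => (fun i : Fin n => H t i ω))
      (fun ω => (fun i : Fin n => H (t - 1) i ω)) ℙ)
    (hVt : 0 < variance (htTE (H t) (Y t) h1 h0) ℙ) :
    -- (a) some convex weight strictly reduces the mean squared error
    (∃ α ∈ Set.Ioo (0 : ℝ) 1,
      ∫ ω, ((α * htTE (H t) (Y t) h1 h0 ω
              + (1 - α) * htTE (H (t - 1)) (Y (t - 1)) h1 h0 ω)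
            - totalEffect (Y t) h1 h0) ^ 2
        < ∫ ω, (htTE (H t) (Y t) h1 h0 ω - totalEffect (Y t) h1 h0) ^ 2) ∧
    -- (b) the optimal weight α = 1 − Var(τ̂_t)/(4ε² + Var(τ̂_t) + Var(τ̂_{t−1}))
    (∀ α : ℝ, α = 1 - variance (htTE (H t) (Y t) h1 h0) ℙ
        / (4 * ε ^ 2 + variance (htTE (H t) (Y t) h1 h0) ℙ
            + variance (htTE (H (t - 1)) (Y (t - 1)) h1 h0) ℙ) →
      (∫ ω, ((α * htTE (H t) (Y t) h1 h0 ω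
              + (1 - α) * htTE (H (t - 1)) (Y (t - 1)) h1 h0 ω)
            - totalEffect (Y t) h1 h0) ^ 2
        ≤ α ^ 2 * variance (htTE (H t) (Y t) h1 h0) ℙ
            + (1 - α) ^ 2 * variance (htTE (H (t - 1)) (Y (t - 1)) h1 h0) ℙ
            + 4 * (1 - α) ^ 2 * ε ^ 2) ∧
      α ^ 2 * variance (htTE (H t) (Y t) h1 h0) ℙ
          + (1 - α) ^ 2 * variance (htTE (H (t - 1)) (Y (t - 1)) h1 h0) ℙ
          + 4 * (1 - α) ^ 2 * ε ^ 2
        < variance (htTE (H t) (Y t) h1 h0) ℙ) := by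
  have ht1T : t - 1 < T := lt_of_le_of_lt (Nat.sub_le t 1) htT
  set X := htTE (H t) (Y t) h1 h0 with hXdef
  set Z := htTE (H (t - 1)) (Y (t - 1)) h1 h0 with hZdef
  set τt := totalEffect (Y t) h1 h0 with hτt
  set τz := totalEffect (Y (t - 1)) h1 h0 with hτz
  set Vt := variance X ℙ with hVtdef
  set Vz := variance Z ℙ with hVzdef
  have hXm : MemLp X 2 ℙ := htTE_memLp _ (hmeas t) _ _ _
  have hZm : MemLp Z 2 ℙ := htTE_memLp _ (hmeas (t - 1)) _ _ _
  have hXZ : IndepFun X Z ℙ :=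
    hindep.comp (measurable_of_finite (htF (H t) (Y t) h1 h0))
      (measurable_of_finite (htF (H (t - 1)) (Y (t - 1)) h1 h0))
  have hEX : ∫ ω, X ω = τt := hunbiased t htT
  have hEZ : ∫ ω, Z ω = τz := hunbiased (t - 1) ht1T
  have hVz0 : 0 ≤ Vz := variance_nonneg _ _
  set b : ℝ := τz - τt with hbdef
  have hmse : ∀ α : ℝ, ∫ ω, (α * X ω + (1 - α) * Z ω - τt) ^ 2
      = α ^ 2 * Vt + (1 - α) ^ 2 * Vz + (1 - α) ^ 2 * b ^ 2 :=
    fun α => mse_decomp X Z hXm hZm hXZ τt τz hEX hEZ α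
  -- bias bound
  have hstab' : ∀ (i : Fin n) (a : Δ), |Y (t - 1) i a - Y t i a| ≤ ε := by
    intro i a
    have h := hstab (t - 1) (by omega) i a
    rwa [Nat.sub_add_cancel ht1] at h
  have hb2 : b ^ 2 ≤ 4 * ε ^ 2 := by
    rcases Nat.eq_zero_or_pos n with hn | hn
    · have hb0 : b = 0 := by
        subst hn; simp [hbdef, hτz, hτt, totalEffect]
      rw [hb0]; norm_num; positivity
    · have hε : 0 ≤ ε := le_trans (abs_nonneg _) (hstab' ⟨0, hn⟩ (h1 ⟨0, hn⟩))
      have hbe : b = (n : ℝ)⁻¹ * ∑ i : Fin n,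
          ((Y (t - 1) i (h1 i) - Y (t - 1) i (h0 i)) - (Y t i (h1 i) - Y t i (h0 i))) := by
        simp only [hbdef, hτz, hτt, totalEffect, ← mul_sub, ← Finset.sum_sub_distrib]
      have habs : |b| ≤ 2 * ε := by
        rw [hbe, abs_mul, abs_of_nonneg (show (0:ℝ) ≤ (n:ℝ)⁻¹ by positivity)]
        have hsum : |∑ i : Fin n,
            ((Y (t - 1) i (h1 i) - Y (t - 1) i (h0 i)) - (Y t i (h1 i) - Y t i (h0 i)))|
            ≤ (n : ℝ) * (2 * ε) := by
          refine le_trans (Finset.abs_sum_le_sum_abs _ _) ?_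
          have : ∀ i ∈ Finset.univ, |(Y (t - 1) i (h1 i) - Y (t - 1) i (h0 i))
              - (Y t i (h1 i) - Y t i (h0 i))| ≤ 2 * ε := by
            intro i _
            have h1b := hstab' i (h1 i)
            have h0b := hstab' i (h0 i)
            rw [abs_le] at h1b h0b ⊢
            constructor <;> [linarith [h1b.1, h0b.2]; linarith [h1b.2, h0b.1]]
          refine le_trans (Finset.sum_le_sum this) ?_
          simp [Finset.sum_const, Finset.card_univ]
        calc (n : ℝ)⁻¹ * |∑ i : Fin n, _| ≤ (n : ℝ)⁻¹ * ((n : ℝ) * (2 * ε)) := by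
              exact mul_le_mul_of_nonneg_left hsum (by positivity)
          _ = 2 * ε := by
              rw [← mul_assoc, inv_mul_cancel₀ (by exact_mod_cast hn.ne' : (n:ℝ) ≠ 0), one_mul]
      nlinarith [abs_nonneg b, sq_abs b]
  have hε2 : (0:ℝ) ≤ ε ^ 2 := sq_nonneg ε
  constructor
  · -- part (a)
    obtain ⟨α₀, hα₀mem, hα₀lt⟩ := alg_a Vt Vz (b ^ 2) (ε ^ 2) hVt hVz0 hε2 hb2 (sq_nonneg b)
    refine ⟨α₀, hα₀mem, ?_⟩
    have hR : ∫ ω, (X ω - τt) ^ 2 = Vt := by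
      have h := hmse 1; simpa using h
    rw [hmse α₀, hR]; exact hα₀lt
  · -- part (b)
    intro α hα
    obtain ⟨hle, hlt⟩ := alg_b Vt Vz (b ^ 2) (ε ^ 2) hVt hVz0 hε2 hb2 α hα
    exact ⟨by rw [hmse α]; exact hle, hlt⟩
end

section
/- Suppose Var(τ̂_t^{TE}) > Cov(τ̂_t^{TE}, τ̂_{t−1}^{TE}). Then there exists α ∈ (0,1) such that the convex combination estimator τ̂_t^c = α τ̂_t^{TE} + (1 − α) τ̂_{t−1}^{TE} has mean squared error for τ_t^{TE} strictly lower than Var(τ̂_t^{TE}). Moreover, if in addition Var(τ̂_t^{TE}) − Var(τ̂_{t−1}^{TE}) > 4ε², then the choice α = 1/2 yields MSE(τ̂_t^c) < Var(τ̂_t^{TE}). -/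
open MeasureTheory ProbabilityTheory Filter
open scoped ProbabilityTheory

/-- Covariance of two real random variables. -/
noncomputable def cov {Ω : Type*} [MeasureSpace Ω] (X Z : Ω → ℝ) : ℝ :=
  ∫ ω, (X ω - ∫ x, X x) * (Z ω - ∫ x, Z x)


section AuxLemmas

lemma htTE_measurable {Ω Δ : Type*} [MeasureSpace Ω] [DecidableEq Δ]
    [MeasurableSpace Δ] [MeasurableSingletonClass Δ] {n : ℕ}
    (H : Fin n → Ω → Δ) (hmeas : ∀ i, Measurable (H i))
    (Y : Fin n → Δ → ℝ) (h1 h0 : Fin n → Δ) :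
    Measurable (htTE H Y h1 h0) := by
  unfold htTE
  refine (Finset.measurable_sum _ fun i _ => ?_).const_mul _
  exact ((Measurable.ite ((hmeas i) (measurableSet_singleton (h1 i)))
      measurable_const measurable_const).sub
    (Measurable.ite ((hmeas i) (measurableSet_singleton (h0 i)))
      measurable_const measurable_const))

lemma htTE_bound {Ω Δ : Type*} [MeasureSpace Ω] [DecidableEq Δ] {n : ℕ}
    (H : Fin n → Ω → Δ) (Y : Fin n → Δ → ℝ) (h1 h0 : Fin n → Δ) (ω : Ω) :
    |htTE H Y h1 h0 ω| ≤ (n : ℝ)⁻¹ * ∑ i : Fin n,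
      (|Y i (h1 i) / (ℙ {ω' | H i ω' = h1 i}).toReal|
        + |Y i (h0 i) / (ℙ {ω' | H i ω' = h0 i}).toReal|) := by
  unfold htTE
  rw [abs_mul, abs_of_nonneg (by positivity : (0:ℝ) ≤ (n:ℝ)⁻¹)]
  refine mul_le_mul_of_nonneg_left ?_ (by positivity)
  refine (Finset.abs_sum_le_sum_abs _ _).trans (Finset.sum_le_sum fun i _ => ?_)
  refine (abs_sub _ _).trans (add_le_add ?_ ?_) <;>
    · split_ifs <;> simp [abs_nonneg]


variable {Ω : Type*} [MeasureSpace Ω] [IsProbabilityMeasure (ℙ : Measure Ω)]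

lemma integrable_of_bdd {f : Ω → ℝ} (hf : Measurable f) {C : ℝ}
    (h : ∀ ω, |f ω| ≤ C) : Integrable f ℙ :=
  memLp_one_iff_integrable.mp <|
    MemLp.of_bound hf.aestronglyMeasurable C (Filter.Eventually.of_forall fun ω => by
      simpa [Real.norm_eq_abs] using h ω)

lemma mse_expand (X Z : Ω → ℝ) (hXm : Measurable X) (hZm : Measurable Z)
    {MX MZ : ℝ} (hbX : ∀ ω, |X ω| ≤ MX) (hbZ : ∀ ω, |Z ω| ≤ MZ) (α τ : ℝ) :
    ∫ ω, (α * X ω + (1 - α) * Z ω - τ) ^ 2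
      = α ^ 2 * variance X ℙ + (1 - α) ^ 2 * variance Z ℙ + 2 * α * (1 - α) * cov X Z
        + (α * (∫ x, X x) + (1 - α) * (∫ x, Z x) - τ) ^ 2 := by
  have hX2 : MemLp X 2 ℙ := MemLp.of_bound hXm.aestronglyMeasurable MX
    (Eventually.of_forall fun ω => by simpa [Real.norm_eq_abs] using hbX ω)
  have hZ2 : MemLp Z 2 ℙ := MemLp.of_bound hZm.aestronglyMeasurable MZ
    (Eventually.of_forall fun ω => by simpa [Real.norm_eq_abs] using hbZ ω)
  set μX := ∫ x, X x with hμX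
  set μZ := ∫ x, Z x with hμZ
  set c := α * μX + (1 - α) * μZ - τ with hc
  set U : Ω → ℝ := fun ω => X ω - μX with hU
  set V : Ω → ℝ := fun ω => Z ω - μZ with hV
  have hXi : Integrable X ℙ := integrable_of_bdd hXm hbX
  have hZi : Integrable Z ℙ := integrable_of_bdd hZm hbZ
  have hUm : Measurable U := hXm.sub measurable_const
  have hVm : Measurable V := hZm.sub measurable_const
  have hbU : ∀ ω, |U ω| ≤ MX + |μX| := fun ω =>
    (abs_sub (X ω) μX).trans (add_le_add_left (hbX ω) _)
  have hbV : ∀ ω, |V ω| ≤ MZ + |μZ| := fun ω =>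
    (abs_sub (Z ω) μZ).trans (add_le_add_left (hbZ ω) _)
  have hUi : Integrable U ℙ := hXi.sub (integrable_const μX)
  have hVi : Integrable V ℙ := hZi.sub (integrable_const μZ)
  have hUint : ∫ ω, U ω = 0 := by
    simp [hU, integral_sub hXi (integrable_const _), measure_univ, hμX]
  have hVint : ∫ ω, V ω = 0 := by
    simp [hV, integral_sub hZi (integrable_const _), measure_univ, hμZ]
  have hU2 : Integrable (fun ω => U ω ^ 2) ℙ :=
    integrable_of_bdd (hUm.pow_const 2) (fun ω => by
      rw [abs_pow]; exact pow_le_pow_left₀ (abs_nonneg _) (hbU ω) 2)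
  have hV2 : Integrable (fun ω => V ω ^ 2) ℙ :=
    integrable_of_bdd (hVm.pow_const 2) (fun ω => by
      rw [abs_pow]; exact pow_le_pow_left₀ (abs_nonneg _) (hbV ω) 2)
  have hUV : Integrable (fun ω => U ω * V ω) ℙ :=
    integrable_of_bdd (hUm.mul hVm) (C := (MX + |μX|) * (MZ + |μZ|)) (fun ω => by
      rw [abs_mul]
      exact mul_le_mul (hbU ω) (hbV ω) (abs_nonneg _) ((abs_nonneg _).trans (hbU ω)))
  have hVX : variance X ℙ = ∫ ω, U ω ^ 2 := by rw [variance_eq_integral hX2.1.aemeasurable]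
  have hVZ : variance Z ℙ = ∫ ω, V ω ^ 2 := by rw [variance_eq_integral hZ2.1.aemeasurable]
  have hC : cov X Z = ∫ ω, U ω * V ω := rfl
  have hpt : (fun ω => (α * X ω + (1 - α) * Z ω - τ) ^ 2)
      = fun ω => α ^ 2 * U ω ^ 2 + ((1 - α) ^ 2 * V ω ^ 2
          + ((2 * α * (1 - α)) * (U ω * V ω)
          + ((2 * α * c) * U ω + ((2 * (1 - α) * c) * V ω + c ^ 2)))) := by
    funext ω; simp only [hU, hV, hc]; ring
  have i5 : Integrable (fun ω => (2 * (1 - α) * c) * V ω + c ^ 2) ℙ :=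
    (hVi.const_mul _).add (integrable_const _)
  have i4 : Integrable (fun ω => (2 * α * c) * U ω + ((2 * (1 - α) * c) * V ω + c ^ 2)) ℙ :=
    (hUi.const_mul _).add i5
  have i3 : Integrable (fun ω => (2 * α * (1 - α)) * (U ω * V ω)
      + ((2 * α * c) * U ω + ((2 * (1 - α) * c) * V ω + c ^ 2))) ℙ :=
    (hUV.const_mul _).add i4
  have i2 : Integrable (fun ω => (1 - α) ^ 2 * V ω ^ 2 + ((2 * α * (1 - α)) * (U ω * V ω)
      + ((2 * α * c) * U ω + ((2 * (1 - α) * c) * V ω + c ^ 2)))) ℙ :=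
    (hV2.const_mul _).add i3
  calc ∫ ω, (α * X ω + (1 - α) * Z ω - τ) ^ 2
      = ∫ ω, (α ^ 2 * U ω ^ 2 + ((1 - α) ^ 2 * V ω ^ 2
          + ((2 * α * (1 - α)) * (U ω * V ω)
          + ((2 * α * c) * U ω + ((2 * (1 - α) * c) * V ω + c ^ 2))))) := by rw [hpt]
    _ = (∫ ω, α ^ 2 * U ω ^ 2) + ∫ ω, ((1 - α) ^ 2 * V ω ^ 2
          + ((2 * α * (1 - α)) * (U ω * V ω)
          + ((2 * α * c) * U ω + ((2 * (1 - α) * c) * V ω + c ^ 2)))) :=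
        integral_add (hU2.const_mul _) i2
    _ = (∫ ω, α ^ 2 * U ω ^ 2) + ((∫ ω, (1 - α) ^ 2 * V ω ^ 2)
          + ∫ ω, ((2 * α * (1 - α)) * (U ω * V ω)
          + ((2 * α * c) * U ω + ((2 * (1 - α) * c) * V ω + c ^ 2)))) := by
        rw [integral_add (hV2.const_mul _) i3]
    _ = (∫ ω, α ^ 2 * U ω ^ 2) + ((∫ ω, (1 - α) ^ 2 * V ω ^ 2)
          + ((∫ ω, (2 * α * (1 - α)) * (U ω * V ω))
          + ∫ ω, ((2 * α * c) * U ω + ((2 * (1 - α) * c) * V ω + c ^ 2)))) := by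
        rw [integral_add (hUV.const_mul _) i4]
    _ = (∫ ω, α ^ 2 * U ω ^ 2) + ((∫ ω, (1 - α) ^ 2 * V ω ^ 2)
          + ((∫ ω, (2 * α * (1 - α)) * (U ω * V ω))
          + ((∫ ω, (2 * α * c) * U ω)
          + ∫ ω, ((2 * (1 - α) * c) * V ω + c ^ 2)))) := by
        rw [integral_add (hUi.const_mul _) i5]
    _ = (∫ ω, α ^ 2 * U ω ^ 2) + ((∫ ω, (1 - α) ^ 2 * V ω ^ 2)
          + ((∫ ω, (2 * α * (1 - α)) * (U ω * V ω))
          + ((∫ ω, (2 * α * c) * U ω)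
          + ((∫ ω, (2 * (1 - α) * c) * V ω) + ∫ (_ : Ω), c ^ 2)))) := by
        rw [integral_add (hVi.const_mul _) (integrable_const _)]
    _ = α ^ 2 * variance X ℙ + (1 - α) ^ 2 * variance Z ℙ + 2 * α * (1 - α) * cov X Z
        + (α * μX + (1 - α) * μZ - τ) ^ 2 := by
        rw [integral_const_mul, integral_const_mul, integral_const_mul, integral_const_mul,
          integral_const_mul, integral_const, hVX, hVZ, hC, hUint, hVint, ← hc]
        simp [measure_univ]
        ring


end AuxLemmas

/-- if `Var(τ̂_t) > Cov(τ̂_t, τ̂_{t−1})` then some convex combination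
of the current and previous estimators strictly reduces the mean squared error; if
moreover `Var(τ̂_t) − Var(τ̂_{t−1}) > 4ε²`, the weight `α = 1/2` suffices. -/
theorem stmt13 {Ω Δ : Type*} [MeasureSpace Ω] [IsProbabilityMeasure (ℙ : Measure Ω)]
    [Fintype Δ] [DecidableEq Δ] [MeasurableSpace Δ] [MeasurableSingletonClass Δ]
    {n T : ℕ}
    (H : ℕ → Fin n → Ω → Δ) (hmeas : ∀ (t : ℕ) (i : Fin n), Measurable (H t i))
    (Y : ℕ → Fin n → Δ → ℝ) (h1 h0 : Fin n → Δ)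
    -- exposure probabilities are positive
    (hpos : ∀ (t : ℕ), t < T → ∀ i : Fin n,
      0 < (ℙ {ω | H t i ω = h1 i}).toReal ∧ 0 < (ℙ {ω | H t i ω = h0 i}).toReal)
    -- ε-weak stability of the potential outcomes
    (ε : ℝ)
    (hstab : ∀ t : ℕ, t + 1 < T → ∀ (i : Fin n) (a : Δ), |Y t i a - Y (t + 1) i a| ≤ ε)
    -- the Horvitz–Thompson estimators are unbiased
    (hunbiased : ∀ t : ℕ, t < T →
      ∫ ω, htTE (H t) (Y t) h1 h0 ω = totalEffect (Y t) h1 h0)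
    (t : ℕ) (ht1 : 1 ≤ t) (htT : t < T)
    -- Var(τ̂_t) > Cov(τ̂_t, τ̂_{t−1})
    (hVC : cov (htTE (H t) (Y t) h1 h0) (htTE (H (t - 1)) (Y (t - 1)) h1 h0)
      < variance (htTE (H t) (Y t) h1 h0) ℙ) :
    -- (a) some convex weight gives mean squared error strictly below Var(τ̂_t)
    (∃ α ∈ Set.Ioo (0 : ℝ) 1,
      ∫ ω, ((α * htTE (H t) (Y t) h1 h0 ω
              + (1 - α) * htTE (H (t - 1)) (Y (t - 1)) h1 h0 ω)
            - totalEffect (Y t) h1 h0) ^ 2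
        < variance (htTE (H t) (Y t) h1 h0) ℙ) ∧
    -- (b) under the stronger variance gap, α = 1/2 works
    (4 * ε ^ 2 < variance (htTE (H t) (Y t) h1 h0) ℙ
        - variance (htTE (H (t - 1)) (Y (t - 1)) h1 h0) ℙ →
      ∫ ω, (((1 : ℝ) / 2 * htTE (H t) (Y t) h1 h0 ω
              + (1 : ℝ) / 2 * htTE (H (t - 1)) (Y (t - 1)) h1 h0 ω)
            - totalEffect (Y t) h1 h0) ^ 2
        < variance (htTE (H t) (Y t) h1 h0) ℙ) := by

  classical
  set X := htTE (H t) (Y t) h1 h0 with hXdef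
  set Z := htTE (H (t - 1)) (Y (t - 1)) h1 h0 with hZdef
  set τ := totalEffect (Y t) h1 h0 with hτdef
  set VX := variance X ℙ with hVXdef
  set VZ := variance Z ℙ with hVZdef
  set C := cov X Z with hCdef
  have hXm : Measurable X := htTE_measurable (H t) (hmeas t) (Y t) h1 h0
  have hZm : Measurable Z := htTE_measurable (H (t - 1)) (hmeas (t - 1)) (Y (t - 1)) h1 h0
  obtain ⟨MX, hbX⟩ : ∃ M, ∀ ω, |X ω| ≤ M := ⟨_, fun ω => htTE_bound (H t) (Y t) h1 h0 ω⟩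
  obtain ⟨MZ, hbZ⟩ : ∃ M, ∀ ω, |Z ω| ≤ M :=
    ⟨_, fun ω => htTE_bound (H (t - 1)) (Y (t - 1)) h1 h0 ω⟩
  have ht1T : t - 1 < T := lt_of_le_of_lt (Nat.sub_le t 1) htT
  have hEX : (∫ x, X x) = τ := hunbiased t htT
  have hEZ : (∫ x, Z x) = totalEffect (Y (t - 1)) h1 h0 := hunbiased (t - 1) ht1T
  set b := totalEffect (Y (t - 1)) h1 h0 - τ with hbdef
  have key : ∀ α : ℝ, ∫ ω, (α * X ω + (1 - α) * Z ω - τ) ^ 2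
      = α ^ 2 * VX + (1 - α) ^ 2 * VZ + 2 * α * (1 - α) * C + (1 - α) ^ 2 * b ^ 2 := by
    intro α
    rw [mse_expand X Z hXm hZm hbX hbZ α τ, hEX, hEZ, hbdef]
    ring
  -- bound on b
  have hts : t - 1 + 1 = t := Nat.succ_pred_eq_of_pos ht1
  have hstab' : ∀ (i : Fin n) (a : Δ), |Y (t - 1) i a - Y t i a| ≤ ε := fun i a => by
    have := hstab (t - 1) (by rw [hts]; exact htT) i a
    rwa [hts] at this
  have hb2 : b ^ 2 ≤ 4 * ε ^ 2 := by
    rcases Nat.eq_zero_or_pos n with hn | hn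
    · have : b = 0 := by
        subst hn
        simp [hbdef, hτdef, totalEffect]
      rw [this]
      nlinarith [sq_nonneg ε]
    · have hi0 : (0 : ℕ) < n := hn
      have hε : 0 ≤ ε := le_trans (abs_nonneg _) (hstab' ⟨0, hi0⟩ (h1 ⟨0, hi0⟩))
      have hbeq : b = (n : ℝ)⁻¹ * ∑ i : Fin n,
          ((Y (t - 1) i (h1 i) - Y (t - 1) i (h0 i)) - (Y t i (h1 i) - Y t i (h0 i))) := by
        rw [hbdef, hτdef]
        unfold totalEffect
        rw [← mul_sub, ← Finset.sum_sub_distrib]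
      have habs : |b| ≤ 2 * ε := by
        rw [hbeq, abs_mul, abs_of_nonneg (by positivity : (0:ℝ) ≤ (n:ℝ)⁻¹)]
        have hsum : |∑ i : Fin n,
            ((Y (t - 1) i (h1 i) - Y (t - 1) i (h0 i)) - (Y t i (h1 i) - Y t i (h0 i)))|
            ≤ (n : ℝ) * (2 * ε) := by
          refine (Finset.abs_sum_le_sum_abs _ _).trans ?_
          have : ∀ i ∈ Finset.univ, |(Y (t - 1) i (h1 i) - Y (t - 1) i (h0 i))
              - (Y t i (h1 i) - Y t i (h0 i))| ≤ 2 * ε := by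
            intro i _
            have e1 := hstab' i (h1 i)
            have e2 := hstab' i (h0 i)
            have : (Y (t - 1) i (h1 i) - Y (t - 1) i (h0 i)) - (Y t i (h1 i) - Y t i (h0 i))
                = (Y (t - 1) i (h1 i) - Y t i (h1 i)) - (Y (t - 1) i (h0 i) - Y t i (h0 i)) := by
              ring
            rw [this]
            calc |(Y (t - 1) i (h1 i) - Y t i (h1 i)) - (Y (t - 1) i (h0 i) - Y t i (h0 i))|
                ≤ |Y (t - 1) i (h1 i) - Y t i (h1 i)| + |Y (t - 1) i (h0 i) - Y t i (h0 i)| :=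
                  abs_sub _ _
              _ ≤ 2 * ε := by linarith
          calc ∑ i : Fin n, |(Y (t - 1) i (h1 i) - Y (t - 1) i (h0 i))
                - (Y t i (h1 i) - Y t i (h0 i))|
              ≤ ∑ _i : Fin n, (2 * ε) := Finset.sum_le_sum this
            _ = (n : ℝ) * (2 * ε) := by simp [Finset.sum_const, mul_comm]
        calc (n : ℝ)⁻¹ * |∑ i : Fin n, ((Y (t - 1) i (h1 i) - Y (t - 1) i (h0 i))
              - (Y t i (h1 i) - Y t i (h0 i)))|
            ≤ (n : ℝ)⁻¹ * ((n : ℝ) * (2 * ε)) := by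
              exact mul_le_mul_of_nonneg_left hsum (by positivity)
          _ = 2 * ε := by
              field_simp
      nlinarith [abs_nonneg b, sq_abs b]
  constructor
  · -- part (a)
    set K := VX + VZ + b ^ 2 - 2 * C with hKdef
    set δ := VX - C with hδdef
    have hδ : 0 < δ := sub_pos.2 hVC
    set s := min (1/2 : ℝ) (δ / (|K| + 1)) with hsdef
    have hs0 : 0 < s := lt_min (by norm_num) (div_pos hδ (by positivity))
    have hs_half : s ≤ 1/2 := min_le_left _ _
    have hsK : s * (|K| + 1) ≤ δ := by
      have := min_le_right (1/2 : ℝ) (δ / (|K| + 1))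
      calc s * (|K| + 1) ≤ (δ / (|K| + 1)) * (|K| + 1) :=
            mul_le_mul_of_nonneg_right this (by positivity)
        _ = δ := by field_simp
    refine ⟨1 - s, ⟨by linarith, by linarith⟩, ?_⟩
    rw [key (1 - s)]
    have hsKabs : s * K ≤ s * |K| := mul_le_mul_of_nonneg_left (le_abs_self K) hs0.le
    nlinarith [hs0, hsK, hsKabs, hδ]
  · -- part (b)
    intro hgap
    have hhalf : ∫ ω, (((1 : ℝ) / 2 * X ω + (1 : ℝ) / 2 * Z ω) - τ) ^ 2
        = ∫ ω, ((1/2 : ℝ) * X ω + (1 - (1/2 : ℝ)) * Z ω - τ) ^ 2 := by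
      norm_num
    rw [hhalf, key (1/2)]
    clear_value X Z τ VX VZ C b
    norm_num
    linarith [hb2, hgap, hVC]
end
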